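/- arXiv:1106.0447 — 2 statements merged into one kernel-verified Lean document; each statement's English description precedes it below -/
import Mathlib

section
/- Let L be a list of distinct keys and consider the recursion tree of Quicksort (using the first element as pivot). A key k lies in the subtree rooted at pivot p if and only if for every key k' preceding p in L: if k' < p then k > k', and if k' > p then k < k'. -/
/-- The list of inputs to all recursive calls (nodes of the recursion tree)
of head-pivot Quicksort on `L`. -/
def calls : List ℤ → List (List ℤ)
  | [] => []
  | h :: t =>
      (h :: t) :: (calls (t.filter (· < h)) ++ calls (t.filter (h < ·)))
termination_by L => L.length
decreasing_by
  all_goals simp [Nat.lt_succ_iff, List.length_filter_le]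
  all_goals exact (List.length_filter_le ..).trans (by simp)

theorem mem_calls_sub : ∀ (L : List ℤ), ∀ M ∈ calls L, M ⊆ L
  | [], M, hM => by simp [calls] at hM
  | h :: t, M, hM => by
    rw [calls] at hM
    rcases List.mem_cons.1 hM with rfl | hM
    · exact fun x hx => hx
    · rcases List.mem_append.1 hM with h1 | h1
      · exact fun x hx => List.mem_cons_of_mem _
          (List.mem_of_mem_filter (mem_calls_sub _ M h1 hx))
      · exact fun x hx => List.mem_cons_of_mem _
          (List.mem_of_mem_filter (mem_calls_sub _ M h1 hx))
termination_by L => L.length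
decreasing_by
  all_goals simp [Nat.lt_succ_iff, List.length_filter_le]

theorem head_mem_of_head? {M : List ℤ} {p : ℤ} (h : M.head? = some p) : p ∈ M := by
  cases M with
  | nil => simp at h
  | cons a t => simp_all

/-- A key `k` lies in the subtree of the recursion tree of Quicksort on `L`
rooted at the node with pivot `p` iff for every key `k'` preceding `p` in `L`:
if `k' < p` then `k > k'`, and if `k' > p` then `k < k'`. -/
theorem stmt0 (L : List ℤ) (hnd : L.Nodup) (p k : ℤ)
    (hp : p ∈ L) (hk : k ∈ L) :
    (∃ M ∈ calls L, M.head? = some p ∧ k ∈ M) ↔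
      (∀ k' : ℤ, [k', p].Sublist L →
        ((k' < p → k' < k) ∧ (p < k' → k < k'))) := by
  cases L with
  | nil => simp at hp
  | cons h t =>
    have hht : h ∉ t := (List.nodup_cons.1 hnd).1
    have hndt : t.Nodup := (List.nodup_cons.1 hnd).2
    rw [calls]
    by_cases hph : p = h
    · subst hph
      constructor
      · intro _ k' hs
        exfalso
        apply hht
        cases hs with
        | cons _ hs' => exact hs'.subset (by simp)
        | cons_cons _ hs' => exact hs'.subset (by simp)
      · intro _
        exact ⟨p :: t, List.mem_cons_self, rfl, hk⟩
    · have hpt : p ∈ t := (List.mem_cons.1 hp).resolve_left hph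
      constructor
      · rintro ⟨M, hM, hhead, hkM⟩
        rcases List.mem_cons.1 hM with rfl | hM
        · exact absurd (by simpa using hhead : h = p).symm hph
        have hpM : p ∈ M := head_mem_of_head? hhead
        rcases List.mem_append.1 hM with hMA | hMA
        · -- left subtree : p, k < h
          have hpF : p ∈ t.filter (· < h) := mem_calls_sub _ M hMA hpM
          have hkF : k ∈ t.filter (· < h) := mem_calls_sub _ M hMA hkM
          have hplt : p < h := by simpa using (List.mem_filter.1 hpF).2
          have hklt : k < h := by simpa using (List.mem_filter.1 hkF).2
          have IH := (stmt0 (t.filter (· < h)) (hndt.filter _) p k hpF hkF).1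
            ⟨M, hMA, hhead, hkM⟩
          intro k' hs
          cases hs with
          | cons _ hs' =>
            have hk't : k' ∈ t := hs'.subset (by simp)
            by_cases hk'h : k' < h
            · have : [k', p].Sublist (t.filter (· < h)) := by
                have := hs'.filter (· < h)
                simpa [hk'h, hplt] using this
              exact IH k' this
            · have hk'h' : h < k' := lt_of_le_of_ne (not_lt.1 hk'h)
                (fun e => hht (e ▸ hk't))
              exact ⟨fun hlt => absurd (hlt.trans hplt) (not_lt.2 hk'h'.le),
                fun _ => hklt.trans hk'h'⟩
          | cons_cons _ hs' =>
            exact ⟨fun hlt => absurd hlt (not_lt.2 hplt.le), fun _ => hklt⟩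
        · -- right subtree : p, k > h
          have hpF : p ∈ t.filter (h < ·) := mem_calls_sub _ M hMA hpM
          have hkF : k ∈ t.filter (h < ·) := mem_calls_sub _ M hMA hkM
          have hplt : h < p := by simpa using (List.mem_filter.1 hpF).2
          have hklt : h < k := by simpa using (List.mem_filter.1 hkF).2
          have IH := (stmt0 (t.filter (h < ·)) (hndt.filter _) p k hpF hkF).1
            ⟨M, hMA, hhead, hkM⟩
          intro k' hs
          cases hs with
          | cons _ hs' =>
            have hk't : k' ∈ t := hs'.subset (by simp)
            by_cases hk'h : h < k'
            · have : [k', p].Sublist (t.filter (h < ·)) := by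
                have := hs'.filter (h < ·)
                simpa [hk'h, hplt] using this
              exact IH k' this
            · have hk'h' : k' < h := lt_of_le_of_ne (not_lt.1 hk'h)
                (fun e => hht (e ▸ hk't))
              exact ⟨fun _ => hk'h'.trans hklt,
                fun hlt => absurd (hplt.trans hlt) (not_lt.2 hk'h'.le)⟩
          | cons_cons _ hs' =>
            exact ⟨fun _ => hklt, fun hlt => absurd hlt (not_lt.2 hplt.le)⟩
      · intro hcond
        have hsh : [h, p].Sublist (h :: t) :=
          (List.singleton_sublist.2 hpt).cons₂ h
        have hch := hcond h hsh
        have hkne : k ≠ h := by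
          rintro rfl
          rcases lt_or_gt_of_ne (Ne.symm hph) with hlt | hlt
          · exact absurd (hch.1 hlt) (lt_irrefl _)
          · exact absurd (hch.2 hlt) (lt_irrefl _)
        have hkt : k ∈ t := (List.mem_cons.1 hk).resolve_left hkne
        rcases lt_or_gt_of_ne (Ne.symm hph) with hlt | hlt
        · -- h < p : right subtree
          have hkh : h < k := hch.1 hlt
          have hpF : p ∈ t.filter (h < ·) := List.mem_filter.2 ⟨hpt, by simpa using hlt⟩
          have hkF : k ∈ t.filter (h < ·) := List.mem_filter.2 ⟨hkt, by simpa using hkh⟩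
          obtain ⟨M, hM, h1, h2⟩ := (stmt0 (t.filter (h < ·)) (hndt.filter _) p k hpF hkF).2
            (fun k' hs => hcond k' ((hs.trans List.filter_sublist).cons h))
          exact ⟨M, List.mem_cons_of_mem _ (List.mem_append_right _ hM), h1, h2⟩
        · -- p < h : left subtree
          have hkh : k < h := hch.2 hlt
          have hpF : p ∈ t.filter (· < h) := List.mem_filter.2 ⟨hpt, by simpa using hlt⟩
          have hkF : k ∈ t.filter (· < h) := List.mem_filter.2 ⟨hkt, by simpa using hkh⟩
          obtain ⟨M, hM, h1, h2⟩ := (stmt0 (t.filter (· < h)) (hndt.filter _) p k hpF hkF).2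
            (fun k' hs => hcond k' ((hs.trans List.filter_sublist).cons h))
          exact ⟨M, List.mem_cons_of_mem _ (List.mem_append_left _ hM), h1, h2⟩
termination_by L.length
decreasing_by
  all_goals subst_vars; simp [Nat.lt_succ_iff, List.length_filter_le]
end

section
/- Memoization soundness for a single memo table: suppose a memo table θ is an 'invariant' table in the sense that whenever θ(β) = v, there exists a pure term t such that the branch β determines the return statement 'return t' in the function body and t evaluates to v under the pure (non-memoizing) semantics. Then evaluating a return statement under the memoizing semantics (looking up β in θ, and on a miss evaluating and storing) yields the same value as the pure semantics, and the updated table is again invariant. -/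
/-- Memoization soundness for a single memo table. A memo table `θ` (partial
map from branches to values) is invariant when every stored binding `θ β = v`
comes from a return statement `return t` determined by `β` in the function
body (via the access function `att`) whose body `t` purely evaluates to `v`.
Then the memoized evaluation of `return t` at branch `β` (lookup, and on a
miss evaluate-and-store) returns `eval t`, and the updated table is again
invariant. -/
theorem stmt11 {Term Value Event : Type} [DecidableEq Event]
    (eval : Term → Value)
    (att : List Event → Option Term)       -- access function for the fixed function body
    (θ : List Event → Option Value)
    (hinv : ∀ β v, θ β = some v → ∃ t, att β = some t ∧ eval t = v)
    (β : List Event) (t : Term) (hβ : att β = some t) :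
    (match θ β with
      | some v => v
      | none => eval t) = eval t ∧
    (∀ β' v,
        (fun b => if b = β then
            some (match θ β with
                  | some v => v
                  | none => eval t)
          else θ b) β' = some v →
        ∃ t', att β' = some t' ∧ eval t' = v) := by
  have hval : (match θ β with | some v => v | none => eval t) = eval t := by
    cases hθ : θ β with
    | none => rfl
    | some v =>
      obtain ⟨t', ht', hv⟩ := hinv β v hθ
      rw [hβ] at ht'; cases ht'; simpa using hv.symm
  refine ⟨hval, ?_⟩
  intro β' v h
  simp only at h
  by_cases hb : β' = β
  · subst hb
    rw [if_pos rfl] at h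
    exact ⟨t, hβ, by rw [← hval]; exact Option.some.inj h⟩
  · rw [if_neg hb] at h
    exact hinv β' v h
end
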